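/- Assume φ satisfies (A.2) and (A.3), the gain matrix V is irreducible, and p̄ ∈ P is the max-min SIR-balanced power vector. Let n₀ ∈ N₀(p̄), and let y and x be strictly positive left and right eigenvectors of B^(n₀) associated with ρ(B^(n₀)), i.e., yᵀB^(n₀) = ρ(B^(n₀)) yᵀ and B^(n₀)x = ρ(B^(n₀)) x. If w = c·(y ∘ x) for some c > 0 (entrywise product), then p̄ maximizes the aggregate utility: Σ_{k=1}^K w_k φ(SIR_k(p)/γ_k) ≤ Σ_{k=1}^K w_k φ(SIR_k(p̄)/γ_k) for every p ∈ P₊. -/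

import Mathlib

open Matrix

/-- A nonnegative square matrix is irreducible. -/
def MatIrred {m : Type*} [Fintype m] (M : Matrix m m ℝ) : Prop :=
  ∀ S : Set m, S.Nonempty → S ≠ Set.univ → ∃ i ∈ S, ∃ j ∉ S, 0 < M i j

/-- Spectral radius of a real square matrix (largest modulus of a complex eigenvalue). -/
noncomputable def specRad {m : Type*} [Fintype m] [DecidableEq m] (M : Matrix m m ℝ) : ℝ :=
  sSup ((fun z : ℂ => ‖z‖) '' spectrum ℂ (M.map fun x => (x : ℂ)))

/-- SIR of link `k` under power vector `p`. -/
noncomputable def SIR {K : ℕ} (V : Matrix (Fin K) (Fin K) ℝ) (z : Fin K → ℝ)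
    (p : Fin K → ℝ) (k : Fin K) : ℝ :=
  p k / (V.mulVec p k + z k)

/-- The polytope of admissible power vectors. -/
def Pset {K N : ℕ} (C : Matrix (Fin N) (Fin K) ℝ) (phat : Fin N → ℝ) :
    Set (Fin K → ℝ) :=
  {p | (∀ k, 0 ≤ p k) ∧ ∀ n, C.mulVec p n ≤ phat n}

/-- Admissible power vectors with all entries positive. -/
def Pplus {K N : ℕ} (C : Matrix (Fin N) (Fin K) ℝ) (phat : Fin N → ℝ) :
    Set (Fin K → ℝ) :=
  {p ∈ Pset C phat | ∀ k, 0 < p k}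

/-- Normalized power-constraint functions `gₙ(p) = cₙᵀ p / Pₙ`. -/
noncomputable def gcon {K N : ℕ} (C : Matrix (Fin N) (Fin K) ℝ) (phat : Fin N → ℝ)
    (n : Fin N) (p : Fin K → ℝ) : ℝ :=
  C.mulVec p n / phat n

/-- The matrices `B⁽ⁿ⁾ = Γ (V + (1/Pₙ) z cₙᵀ)`. -/
noncomputable def Bmat {K N : ℕ} (V : Matrix (Fin K) (Fin K) ℝ) (z : Fin K → ℝ)
    (γ : Fin K → ℝ) (C : Matrix (Fin N) (Fin K) ℝ) (phat : Fin N → ℝ) (n : Fin N) :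
    Matrix (Fin K) (Fin K) ℝ :=
  Matrix.diagonal γ * (V + (phat n)⁻¹ • Matrix.vecMulVec z (C n))

/-- The extended `(K+1)×(K+1)` matrices `A⁽ⁿ⁾`. -/
noncomputable def Amat {K N : ℕ} (V : Matrix (Fin K) (Fin K) ℝ) (z : Fin K → ℝ)
    (γ : Fin K → ℝ) (C : Matrix (Fin N) (Fin K) ℝ) (phat : Fin N → ℝ) (n : Fin N) :
    Matrix (Fin (K+1)) (Fin (K+1)) ℝ :=
  Matrix.of fun i j =>
    if hi : (i : ℕ) < K then
      if hj : (j : ℕ) < K then γ ⟨i, hi⟩ * V ⟨i, hi⟩ ⟨j, hj⟩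
      else γ ⟨i, hi⟩ * z ⟨i, hi⟩
    else
      if hj : (j : ℕ) < K then (phat n)⁻¹ * ∑ k, C n k * (γ k * V k ⟨j, hj⟩)
      else (phat n)⁻¹ * ∑ k, C n k * (γ k * z k)

/-- `pbar` is a max-min SIR-balanced power vector: it maximizes
`p ↦ min_k SIR_k(p)/γ_k` over the set `P`. -/
def MaxMinBalanced {K N : ℕ} (V : Matrix (Fin K) (Fin K) ℝ) (z : Fin K → ℝ)
    (γ : Fin K → ℝ) (C : Matrix (Fin N) (Fin K) ℝ) (phat : Fin N → ℝ)
    (pbar : Fin K → ℝ) : Prop :=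
  pbar ∈ Pset C phat ∧
    ∀ p ∈ Pset C phat, (⨅ k, SIR V z p k / γ k) ≤ ⨅ k, SIR V z pbar k / γ k

/-- The set `N₀(p)` of active power constraints. -/
def activeSet {K N : ℕ} (C : Matrix (Fin N) (Fin K) ℝ) (phat : Fin N → ℝ)
    (p : Fin K → ℝ) : Set (Fin N) :=
  {n | gcon C phat n p = 1 ∧ ∀ m, gcon C phat m p ≤ gcon C phat n p}

/-- The (relatively open) probability simplex `Π⁺_K`. -/
def PosSimplex (K : ℕ) : Set (Fin K → ℝ) :=
  {w | (∀ k, 0 < w k) ∧ ∑ k, w k = 1}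

/-- The feasible QoS region `F`. -/
def QoSRegion {K N : ℕ} (V : Matrix (Fin K) (Fin K) ℝ) (z : Fin K → ℝ)
    (γ : Fin K → ℝ) (C : Matrix (Fin N) (Fin K) ℝ) (phat : Fin N → ℝ)
    (φ : ℝ → ℝ) : Set (Fin K → ℝ) :=
  {q | ∃ p ∈ Pplus C phat, ∀ k, q k = φ (SIR V z p k / γ k)}


/-- Perron-type log inequality via Jensen: if `y, x` are positive left/right
eigenvectors of a nonnegative matrix `B` for eigenvalue `ρ > 0`, then for every
positive `p`, `∑ yₖxₖ (log ρ + log pₖ) ≤ ∑ yₖxₖ log (Bp)ₖ`. -/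
lemma jensenPF {K : ℕ} (B : Matrix (Fin K) (Fin K) ℝ) (hB : ∀ i j, 0 ≤ B i j)
    (ρ : ℝ) (hρ : 0 < ρ) (y x p : Fin K → ℝ)
    (hy : ∀ k, 0 < y k) (hx : ∀ k, 0 < x k) (hp : ∀ k, 0 < p k)
    (hyB : y ᵥ* B = ρ • y) (hBx : B *ᵥ x = ρ • x) :
    ∑ k, y k * x k * (Real.log ρ + Real.log (p k)) ≤
      ∑ k, y k * x k * Real.log (B.mulVec p k) := by
  have hBxk : ∀ k, ∑ j, B k j * x j = ρ * x k := by
    intro k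
    have := congrFun hBx k
    simpa [Matrix.mulVec, dotProduct] using this
  have hyBk : ∀ j, ∑ k, y k * B k j = ρ * y j := by
    intro j
    have := congrFun hyB j
    simpa [Matrix.vecMul, dotProduct] using this
  -- each row has a positive entry against x, hence (Bp)ₖ > 0
  have hrow : ∀ k, ∃ j, 0 < B k j := by
    intro k
    by_contra hc
    push_neg at hc
    have : ∑ j, B k j * x j ≤ 0 := by
      apply Finset.sum_nonpos
      intro j _
      exact mul_nonpos_of_nonpos_of_nonneg (hc j) (hx j).le
    rw [hBxk k] at this
    exact absurd this (not_le.2 (mul_pos hρ (hx k)))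
  have hBp : ∀ k, 0 < B.mulVec p k := by
    intro k
    obtain ⟨j, hj⟩ := hrow k
    have h1 : B k j * p j ≤ ∑ m, B k m * p m :=
      Finset.single_le_sum (fun m _ => mul_nonneg (hB k m) (hp m).le) (Finset.mem_univ j)
    have : 0 < B k j * p j := mul_pos hj (hp j)
    simpa [Matrix.mulVec, dotProduct] using this.trans_le h1
  -- Jensen per row
  have key : ∀ k, ∑ j, y k * (B k j * x j) * (Real.log (p j) - Real.log (x j)) ≤
      ρ * (y k * x k) * (Real.log (B.mulVec p k) - (Real.log ρ + Real.log (x k))) := by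
    intro k
    have hck : (0:ℝ) < ρ * x k := mul_pos hρ (hx k)
    set w : Fin K → ℝ := fun j => B k j * x j / (ρ * x k) with hw
    have h₀ : ∀ j ∈ Finset.univ, 0 ≤ w j := fun j _ =>
      div_nonneg (mul_nonneg (hB k j) (hx j).le) hck.le
    have h₁ : ∑ j, w j = 1 := by
      rw [← Finset.sum_div, hBxk k, div_self hck.ne']
    have hmem : ∀ j ∈ Finset.univ, p j / x j ∈ Set.Ioi (0:ℝ) :=
      fun j _ => div_pos (hp j) (hx j)
    have hjensen := (strictConcaveOn_log_Ioi.concaveOn).le_map_sum h₀ h₁ hmem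
    have hsum : ∑ j, w j • (p j / x j) = B.mulVec p k / (ρ * x k) := by
      simp only [smul_eq_mul, Matrix.mulVec, dotProduct, Finset.sum_div]
      apply Finset.sum_congr rfl
      intro j _
      have : w j * (p j / x j) = B k j * p j / (ρ * x k) * (x j / x j) := by
        rw [hw]; ring
      rw [this, div_self (hx j).ne', mul_one]
    rw [hsum] at hjensen
    -- hjensen : ∑ j, w j • log (p j / x j) ≤ log (B.mulVec p k / (ρ * x k))
    have hmul := mul_le_mul_of_nonneg_left hjensen (le_of_lt (mul_pos (hy k) hck))
    calc ∑ j, y k * (B k j * x j) * (Real.log (p j) - Real.log (x j))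
        = (y k * (ρ * x k)) * ∑ j, w j • Real.log (p j / x j) := by
          rw [Finset.mul_sum]
          apply Finset.sum_congr rfl
          intro j _
          rw [Real.log_div (hp j).ne' (hx j).ne', smul_eq_mul]
          have : y k * (ρ * x k) * (w j * (Real.log (p j) - Real.log (x j))) =
              y k * (B k j * x j) * (Real.log (p j) - Real.log (x j)) * ((ρ * x k) / (ρ * x k)) := by
            rw [hw]; ring
          rw [this, div_self hck.ne', mul_one]
      _ ≤ (y k * (ρ * x k)) * Real.log (B.mulVec p k / (ρ * x k)) := hmul
      _ = ρ * (y k * x k) * (Real.log (B.mulVec p k) - (Real.log ρ + Real.log (x k))) := by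
          rw [Real.log_div (hBp k).ne' hck.ne', Real.log_mul hρ.ne' (hx k).ne']
          ring
  have hsummed := Finset.sum_le_sum (s := Finset.univ) (fun k _ => key k)
  -- compute the LHS of hsummed by swapping sums
  have hLHS : ∑ k, ∑ j, y k * (B k j * x j) * (Real.log (p j) - Real.log (x j)) =
      ∑ j, ρ * (y j * x j) * (Real.log (p j) - Real.log (x j)) := by
    rw [Finset.sum_comm]
    apply Finset.sum_congr rfl
    intro j _
    have : ∑ k, y k * (B k j * x j) * (Real.log (p j) - Real.log (x j)) =
        (∑ k, y k * B k j) * (x j * (Real.log (p j) - Real.log (x j))) := by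
      rw [Finset.sum_mul]
      apply Finset.sum_congr rfl
      intro k _
      ring
    rw [this, hyBk j]
    ring
  rw [hLHS] at hsummed
  -- rearrange
  have hdiff : 0 ≤ ρ * (∑ k, y k * x k * Real.log (B.mulVec p k) -
      ∑ k, y k * x k * (Real.log ρ + Real.log (p k))) := by
    have h2 : ρ * (∑ k, y k * x k * Real.log (B.mulVec p k) -
        ∑ k, y k * x k * (Real.log ρ + Real.log (p k))) =
        (∑ k, ρ * (y k * x k) * (Real.log (B.mulVec p k) - (Real.log ρ + Real.log (x k)))) -
        ∑ j, ρ * (y j * x j) * (Real.log (p j) - Real.log (x j)) := by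
      rw [mul_sub, Finset.mul_sum, Finset.mul_sum, ← Finset.sum_sub_distrib,
        ← Finset.sum_sub_distrib]
      apply Finset.sum_congr rfl
      intro k _
      ring
    rw [h2]
    exact sub_nonneg.2 hsummed
  have h3 : 0 ≤ ∑ k, y k * x k * Real.log (B.mulVec p k) -
      ∑ k, y k * x k * (Real.log ρ + Real.log (p k)) := by
    by_contra hcon
    push_neg at hcon
    nlinarith
  linarith

lemma lt_ciInf_fin {K : ℕ} [Nonempty (Fin K)] (f : Fin K → ℝ) {c : ℝ}
    (h : ∀ k, c < f k) : c < ⨅ k, f k := by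
  obtain ⟨k0, -, hk0⟩ := Finset.exists_min_image Finset.univ f Finset.univ_nonempty
  have heq : ⨅ k, f k = f k0 :=
    le_antisymm (ciInf_le (Finite.bddBelow_range f) k0)
      (le_ciInf fun j => hk0 j (Finset.mem_univ j))
  rw [heq]; exact h k0

theorem stmt16    {K N : ℕ} (hK : 2 ≤ K) (hN : 1 ≤ N)
    (V : Matrix (Fin K) (Fin K) ℝ) (z γ : Fin K → ℝ)
    (C : Matrix (Fin N) (Fin K) ℝ) (phat : Fin N → ℝ)
    (hV : ∀ i j, 0 ≤ V i j) (hVdiag : ∀ i, V i i = 0)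
    (hz : ∀ k, 0 < z k) (hγ : ∀ k, 0 < γ k)
    (hC : ∀ n k, C n k = 0 ∨ C n k = 1) (hCcol : ∀ k, ∃ n, C n k = 1)
    (hphat : ∀ n, 0 < phat n)
    (hirr : MatIrred V)
    (φ g : ℝ → ℝ)
    (hφdiff : ContDiffOn ℝ 1 φ (Set.Ioi 0)) (hφmono : StrictMonoOn φ (Set.Ioi 0))
    (hginv : ∀ x ∈ Set.Ioi (0:ℝ), g (φ x) = x) (hφg : ∀ q ∈ φ '' Set.Ioi 0, φ (g q) = q)
    (hglog : ConvexOn ℝ (φ '' Set.Ioi 0) fun q => Real.log (g q))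
    (pbar : Fin K → ℝ) (hbal : MaxMinBalanced V z γ C phat pbar)
    (n₀ : Fin N) (hn₀ : n₀ ∈ activeSet C phat pbar)
    (y x : Fin K → ℝ) (hy : ∀ k, 0 < y k) (hx : ∀ k, 0 < x k)
    (hyeig : y ᵥ* Bmat V z γ C phat n₀ = specRad (Bmat V z γ C phat n₀) • y)
    (hxeig : Bmat V z γ C phat n₀ *ᵥ x = specRad (Bmat V z γ C phat n₀) • x)
    (c : ℝ) (hc : 0 < c) (w : Fin K → ℝ) (hw : ∀ k, w k = c * (y k * x k)) :
    ∀ p ∈ Pplus C phat,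
      ∑ k, w k * φ (SIR V z p k / γ k) ≤ ∑ k, w k * φ (SIR V z pbar k / γ k) := by
  classical
  have hKpos : 0 < K := by omega
  haveI hKne : Nonempty (Fin K) := ⟨⟨0, hKpos⟩⟩
  haveI hNne : Nonempty (Fin N) := ⟨⟨0, by omega⟩⟩
  obtain ⟨⟨hpbar_nn, hpbar_con⟩, hmax⟩ := hbal
  set B := Bmat V z γ C phat n₀ with hBdef
  set ρ := specRad B with hρdef
  set t := ⨅ k, SIR V z pbar k / γ k with htdef
  have hCnn : ∀ n k, 0 ≤ C n k := fun n k => by rcases hC n k with h | h <;> simp [h]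
  have hBapp : ∀ i j, B i j = γ i * (V i j + (phat n₀)⁻¹ * (z i * C n₀ j)) := by
    intro i j
    rw [hBdef]
    simp [Bmat, Matrix.diagonal_mul, Matrix.add_apply, Matrix.smul_apply,
      Matrix.vecMulVec_apply, smul_eq_mul]
  have hBnn : ∀ i j, 0 ≤ B i j := by
    intro i j
    rw [hBapp]
    apply mul_nonneg (hγ i).le
    apply add_nonneg (hV i j)
    exact mul_nonneg (inv_nonneg.2 (hphat n₀).le) (mul_nonneg (hz i).le (hCnn n₀ j))
  have hBmulVec : ∀ (p : Fin K → ℝ) (k : Fin K),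
      (B *ᵥ p) k = γ k * (V.mulVec p k + (phat n₀)⁻¹ * (z k * C.mulVec p n₀)) := by
    intro p k
    simp only [Matrix.mulVec, dotProduct]
    calc ∑ j, B k j * p j
        = ∑ j, (γ k * (V k j * p j) + (γ k * ((phat n₀)⁻¹ * z k)) * (C n₀ j * p j)) := by
          refine Finset.sum_congr rfl fun j _ => ?_
          rw [hBapp]; ring
      _ = γ k * (∑ j, V k j * p j) + (γ k * ((phat n₀)⁻¹ * z k)) * ∑ j, C n₀ j * p j := by
          rw [Finset.sum_add_distrib, Finset.mul_sum, Finset.mul_sum]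
      _ = _ := by ring
  have hVp_nn : ∀ (p : Fin K → ℝ), (∀ k, 0 ≤ p k) → ∀ k, 0 ≤ V.mulVec p k := by
    intro p hp k
    simp only [Matrix.mulVec, dotProduct]
    apply Finset.sum_nonneg
    intro j _
    exact mul_nonneg (hV k j) (hp j)
  have hden_pos : ∀ (p : Fin K → ℝ), (∀ k, 0 ≤ p k) → ∀ k, 0 < V.mulVec p k + z k := by
    intro p hp k
    have := hVp_nn p hp k
    linarith [hz k]
  have hVp_pos : ∀ (p : Fin K → ℝ), (∀ k, 0 < p k) → ∀ k, 0 < V.mulVec p k := by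
    intro p hp k
    have hne : ({k} : Set (Fin K)).Nonempty := ⟨k, rfl⟩
    have hne2 : ({k} : Set (Fin K)) ≠ Set.univ := by
      haveI : Nontrivial (Fin K) := Fin.nontrivial_iff_two_le.mpr hK
      obtain ⟨j, hj⟩ := exists_ne k
      intro hctr
      apply hj
      have : j ∈ ({k} : Set (Fin K)) := hctr ▸ Set.mem_univ j
      simpa using this
    obtain ⟨i, hi, j, hj, hVij⟩ := hirr {k} hne hne2
    rw [Set.mem_singleton_iff] at hi
    subst hi
    have h1 : V i j * p j ≤ ∑ m, V i m * p m :=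
      Finset.single_le_sum (fun m _ => mul_nonneg (hV i m) (hp m).le) (Finset.mem_univ j)
    have h2 : 0 < V i j * p j := mul_pos hVij (hp j)
    simpa [Matrix.mulVec, dotProduct] using h2.trans_le h1
  have hSIRpos : ∀ (p : Fin K → ℝ), (∀ k, 0 < p k) → ∀ k, 0 < SIR V z p k / γ k := by
    intro p hp k
    exact div_pos (div_pos (hp k) (hden_pos p (fun m => (hp m).le) k)) (hγ k)
  have ht_pos : 0 < t := by
    have hCx_nn : ∀ n, 0 ≤ C.mulVec x n := by
      intro n
      simp only [Matrix.mulVec, dotProduct]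
      apply Finset.sum_nonneg
      intro j _
      exact mul_nonneg (hCnn n j) (hx j).le
    have hden2 : ∀ n, 0 < C.mulVec x n + 1 := fun n => by linarith [hCx_nn n]
    set ε₀ := Finset.univ.inf' Finset.univ_nonempty (fun n => phat n / (C.mulVec x n + 1))
      with hε₀def
    have hε₀ : 0 < ε₀ :=
      (Finset.lt_inf'_iff _).mpr (fun n _ => div_pos (hphat n) (hden2 n))
    have hfeas : ∀ n, C.mulVec (ε₀ • x) n ≤ phat n := by
      intro n
      rw [Matrix.mulVec_smul]
      have h1 : ε₀ ≤ phat n / (C.mulVec x n + 1) :=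
        Finset.inf'_le _ (Finset.mem_univ n)
      have h2 := (le_div_iff₀ (hden2 n)).1 h1
      have h3 : (ε₀ • (C *ᵥ x)) n = ε₀ * C.mulVec x n := rfl
      rw [h3]
      nlinarith [hCx_nn n, hε₀]
    have hmem : (ε₀ • x) ∈ Pset C phat :=
      ⟨fun k => (smul_pos hε₀ (hx k)).le, hfeas⟩
    have h1 := hmax (ε₀ • x) hmem
    have h2 : 0 < ⨅ k, SIR V z (ε₀ • x) k / γ k :=
      lt_ciInf_fin _ (fun k => hSIRpos _ (fun m => smul_pos hε₀ (hx m)) k)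
    linarith
  have ht_le : ∀ k, t ≤ SIR V z pbar k / γ k := by
    intro k
    rw [htdef]
    exact ciInf_le (Finite.bddBelow_range _) k
  have hpbar_pos : ∀ k, 0 < pbar k := by
    intro k
    rcases (hpbar_nn k).lt_or_eq with h | h
    · exact h
    · exfalso
      have hz0 : SIR V z pbar k / γ k = 0 := by
        rw [SIR, ← h]
        simp
      have := ht_le k
      rw [hz0] at this
      linarith
  have descent : ∀ S : Finset (Fin K), (↑S : Set (Fin K)) ≠ Set.univ →
      (∃ p : Fin K → ℝ, (∀ k, 0 < p k) ∧ (∀ n, C.mulVec p n ≤ phat n) ∧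
        (∀ k, t ≤ SIR V z p k / γ k) ∧ ∀ k ∉ S, t < SIR V z p k / γ k) → False := by
    intro S
    induction S using Finset.strongInduction with
    | _ S ih =>
      intro hSuniv hex
      obtain ⟨p, hp_pos, hp_con, hp_ge, hp_gt⟩ := hex
      rcases S.eq_empty_or_nonempty with rfl | hSne
      · have hmem : p ∈ Pset C phat := ⟨fun k => (hp_pos k).le, hp_con⟩
        have h1 := hmax p hmem
        have h2 : t < ⨅ k, SIR V z p k / γ k :=
          lt_ciInf_fin _ (fun k => hp_gt k (Finset.notMem_empty k))
        linarith
      · obtain ⟨i, hi, j, hj, hVij⟩ := hirr ↑S (Finset.coe_nonempty.mpr hSne) hSuniv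
        have hiS : i ∈ S := Finset.mem_coe.mp hi
        have hjS : j ∉ S := fun h => hj (Finset.mem_coe.mpr h)
        have hScne : Sᶜ.Nonempty := ⟨j, Finset.mem_compl.mpr hjS⟩
        set m := Sᶜ.inf' hScne (fun k => SIR V z p k / γ k) with hm
        have hm_gt : t < m :=
          (Finset.lt_inf'_iff _).mpr (fun k hk => hp_gt k (Finset.mem_compl.mp hk))
        have hm_pos : 0 < m := lt_trans ht_pos hm_gt
        have hm_le : ∀ k ∉ S, m ≤ SIR V z p k / γ k := fun k hk =>
          Finset.inf'_le _ (Finset.mem_compl.mpr hk)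
        set ε := (m - t) / (2 * m) with hε
        have hε_pos : 0 < ε := div_pos (by linarith) (by linarith)
        have hε_lt1 : ε < 1 := by
          rw [hε, div_lt_one (by linarith)]
          linarith
        have h1ε : 0 < 1 - ε := by linarith
        have hεm : (1 - ε) * m = (m + t) / 2 := by
          rw [hε]
          field_simp
          ring
        set p' := fun k => if k ∈ S then p k else (1 - ε) * p k with hp'
        have hp'_pos : ∀ k, 0 < p' k := by
          intro k
          rw [hp']
          dsimp only
          split
          · exact hp_pos k
          · exact mul_pos h1ε (hp_pos k)
        have hp'_le : ∀ k, p' k ≤ p k := by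
          intro k
          rw [hp']
          dsimp only
          split
          · exact le_refl _
          · nlinarith [hp_pos k, hε_pos]
        have hp'_con : ∀ n, C.mulVec p' n ≤ phat n := by
          intro n
          refine le_trans ?_ (hp_con n)
          simp only [Matrix.mulVec, dotProduct]
          apply Finset.sum_le_sum
          intro k _
          exact mul_le_mul_of_nonneg_left (hp'_le k) (hCnn n k)
        have hden'_le : ∀ k, V.mulVec p' k ≤ V.mulVec p k := by
          intro k
          simp only [Matrix.mulVec, dotProduct]
          apply Finset.sum_le_sum
          intro l _
          exact mul_le_mul_of_nonneg_left (hp'_le l) (hV k l)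
        have hden'_lt_i : V.mulVec p' i < V.mulVec p i := by
          simp only [Matrix.mulVec, dotProduct]
          apply Finset.sum_lt_sum
          · intro l _
            exact mul_le_mul_of_nonneg_left (hp'_le l) (hV i l)
          · refine ⟨j, Finset.mem_univ j, ?_⟩
            have hpj : p' j < p j := by
              rw [hp']
              dsimp only
              rw [if_neg hjS]
              nlinarith [hp_pos j, hε_pos]
            exact mul_lt_mul_of_pos_left hpj hVij
        have hd'pos : ∀ k, 0 < V.mulVec p' k + z k :=
          hden_pos p' (fun k => (hp'_pos k).le)
        have hS_mono : ∀ k ∈ S, SIR V z p k / γ k ≤ SIR V z p' k / γ k := by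
          intro k hk
          have hnum : p' k = p k := by rw [hp']; dsimp only; rw [if_pos hk]
          have h1 : p k / (V.mulVec p k + z k) ≤ p k / (V.mulVec p' k + z k) :=
            div_le_div_of_nonneg_left (hp_pos k).le (hd'pos k) (by linarith [hden'_le k])
          rw [SIR, SIR, hnum, div_eq_mul_inv _ (γ k), div_eq_mul_inv _ (γ k)]
          exact mul_le_mul_of_nonneg_right h1 (inv_nonneg.2 (hγ k).le)
        have hSc_bound : ∀ k ∉ S, (1 - ε) * (SIR V z p k / γ k) ≤ SIR V z p' k / γ k := by
          intro k hk
          have hnum : p' k = (1 - ε) * p k := by rw [hp']; dsimp only; rw [if_neg hk]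
          rw [SIR, SIR, hnum]
          have h1 : (1 - ε) * p k / (V.mulVec p k + z k) ≤
              (1 - ε) * p k / (V.mulVec p' k + z k) := by
            exact div_le_div_of_nonneg_left (mul_nonneg h1ε.le (hp_pos k).le)
              (hd'pos k) (by linarith [hden'_le k])
          calc (1 - ε) * (p k / (V.mulVec p k + z k) / γ k)
              = (1 - ε) * p k / (V.mulVec p k + z k) * (γ k)⁻¹ := by
                rw [div_eq_mul_inv _ (γ k)]; ring
            _ ≤ (1 - ε) * p k / (V.mulVec p' k + z k) * (γ k)⁻¹ :=
                mul_le_mul_of_nonneg_right h1 (inv_nonneg.2 (hγ k).le)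
            _ = (1 - ε) * p k / (V.mulVec p' k + z k) / γ k := by
                rw [div_eq_mul_inv _ (γ k)]
        have hSc_gt : ∀ k ∉ S, t < SIR V z p' k / γ k := by
          intro k hk
          have h1 : t < (1 - ε) * m := by rw [hεm]; linarith
          have h2 : (1 - ε) * m ≤ (1 - ε) * (SIR V z p k / γ k) :=
            mul_le_mul_of_nonneg_left (hm_le k hk) h1ε.le
          linarith [hSc_bound k hk]
        have hi_gt : t < SIR V z p' i / γ i := by
          have hnum : p' i = p i := by rw [hp']; dsimp only; rw [if_pos hiS]
          have h1 : p i / (V.mulVec p i + z i) < p i / (V.mulVec p' i + z i) :=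
            div_lt_div_of_pos_left (hp_pos i) (hd'pos i) (by linarith [hden'_lt_i])
          have h2 : SIR V z p i / γ i < SIR V z p' i / γ i := by
            rw [SIR, SIR, hnum, div_eq_mul_inv _ (γ i), div_eq_mul_inv _ (γ i)]
            exact mul_lt_mul_of_pos_right h1 (inv_pos.2 (hγ i))
          linarith [hp_ge i]
        refine ih (S.erase i) (Finset.erase_ssubset hiS) ?_ ?_
        · intro hctr
          have : j ∈ (↑(S.erase i) : Set (Fin K)) := hctr ▸ Set.mem_univ j
          exact hjS (Finset.mem_of_mem_erase (Finset.mem_coe.mp this))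
        · refine ⟨p', hp'_pos, hp'_con, ?_, ?_⟩
          · intro k
            by_cases hk : k ∈ S
            · exact le_trans (hp_ge k) (hS_mono k hk)
            · exact (hSc_gt k hk).le
          · intro k hk
            by_cases hkS : k ∈ S
            · have hki : k = i := by
                by_contra hne
                exact hk (Finset.mem_erase.mpr ⟨hne, hkS⟩)
              rw [hki]
              exact hi_gt
            · exact hSc_gt k hkS
  have hbalance : ∀ k, SIR V z pbar k / γ k = t := by
    by_contra hcon
    push_neg at hcon
    obtain ⟨k₁, hk₁⟩ := hcon
    have hk₁' : t < SIR V z pbar k₁ / γ k₁ := lt_of_le_of_ne (ht_le k₁) (Ne.symm hk₁)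
    apply descent (Finset.univ.filter (fun k => SIR V z pbar k / γ k ≤ t))
    · intro hctr
      have hmem : k₁ ∈ (↑(Finset.univ.filter (fun k => SIR V z pbar k / γ k ≤ t)) :
          Set (Fin K)) := hctr ▸ Set.mem_univ k₁
      have := (Finset.mem_filter.mp (Finset.mem_coe.mp hmem)).2
      linarith
    · refine ⟨pbar, hpbar_pos, hpbar_con, ht_le, ?_⟩
      intro k hk
      have : ¬ (SIR V z pbar k / γ k ≤ t) := fun h =>
        hk (Finset.mem_filter.mpr ⟨Finset.mem_univ k, h⟩)
      linarith
  have hact : C.mulVec pbar n₀ = phat n₀ := by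
    have h1 := hn₀.1
    rw [gcon] at h1
    exact (div_eq_one_iff_eq (hphat n₀).ne').1 h1
  have hBpbar : ∀ k, (B *ᵥ pbar) k = pbar k / t := by
    intro k
    rw [hBmulVec, hact]
    have hden := hden_pos pbar hpbar_nn k
    have hsk := hbalance k
    rw [SIR, div_div] at hsk
    have hpk : pbar k = t * ((V.mulVec pbar k + z k) * γ k) :=
      (div_eq_iff (mul_pos hden (hγ k)).ne').1 hsk
    have hzz : (phat n₀)⁻¹ * (z k * phat n₀) = z k := by
      rw [mul_comm, mul_assoc, mul_inv_cancel₀ (hphat n₀).ne', mul_one]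
    rw [hzz, hpk]
    field_simp [ht_pos.ne']
  have hydotpbar : 0 < y ⬝ᵥ pbar :=
    Finset.sum_pos (fun k _ => mul_pos (hy k) (hpbar_pos k)) Finset.univ_nonempty
  have hρt : ρ * t = 1 := by
    have h1 : y ⬝ᵥ (B *ᵥ pbar) = ρ * (y ⬝ᵥ pbar) := by
      rw [Matrix.dotProduct_mulVec, hyeig, smul_dotProduct, smul_eq_mul]
    have h2 : y ⬝ᵥ (B *ᵥ pbar) = (y ⬝ᵥ pbar) / t := by
      simp only [dotProduct]
      rw [Finset.sum_div]
      refine Finset.sum_congr rfl fun k _ => ?_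
      rw [hBpbar k]
      ring
    rw [h2] at h1
    have h3 : (ρ * t) * (y ⬝ᵥ pbar) = 1 * (y ⬝ᵥ pbar) := by
      calc (ρ * t) * (y ⬝ᵥ pbar) = t * (ρ * (y ⬝ᵥ pbar)) := by ring
        _ = t * ((y ⬝ᵥ pbar) / t) := by rw [← h1]
        _ = 1 * (y ⬝ᵥ pbar) := by rw [one_mul, mul_comm, div_mul_cancel₀ _ ht_pos.ne']
    exact mul_right_cancel₀ hydotpbar.ne' h3
  have hρ_pos : 0 < ρ := by nlinarith [ht_pos]
  intro p hp
  obtain ⟨hpmem, hppos⟩ := hp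
  set W := ∑ k, y k * x k with hW
  have hW_pos : 0 < W :=
    Finset.sum_pos (fun k _ => mul_pos (hy k) (hx k)) Finset.univ_nonempty
  have hsp_pos : ∀ k, 0 < SIR V z p k / γ k := hSIRpos p hppos
  have hBp_pos : ∀ k, 0 < (B *ᵥ p) k := by
    intro k
    rw [hBmulVec]
    have h1 := hVp_pos p hppos k
    have h2 : 0 ≤ (phat n₀)⁻¹ * (z k * C.mulVec p n₀) := by
      apply mul_nonneg (inv_nonneg.2 (hphat n₀).le)
      apply mul_nonneg (hz k).le
      simp only [Matrix.mulVec, dotProduct]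
      apply Finset.sum_nonneg
      intro l _
      exact mul_nonneg (hCnn n₀ l) (hppos l).le
    have := hγ k
    nlinarith
  have hs_le : ∀ k, SIR V z p k / γ k ≤ p k / (B *ᵥ p) k := by
    intro k
    rw [hBmulVec]
    have hd := hden_pos p (fun l => (hppos l).le) k
    have hco : C.mulVec p n₀ ≤ phat n₀ := hpmem.2 n₀
    have h2 : (phat n₀)⁻¹ * (z k * C.mulVec p n₀) ≤ z k := by
      have h3 : z k * C.mulVec p n₀ ≤ z k * phat n₀ :=
        mul_le_mul_of_nonneg_left hco (hz k).le
      calc (phat n₀)⁻¹ * (z k * C.mulVec p n₀)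
          ≤ (phat n₀)⁻¹ * (z k * phat n₀) :=
            mul_le_mul_of_nonneg_left h3 (inv_nonneg.2 (hphat n₀).le)
        _ = z k := by
            rw [mul_comm, mul_assoc, mul_inv_cancel₀ (hphat n₀).ne', mul_one]
    have h1 := hVp_pos p hppos k
    have h0 : 0 ≤ (phat n₀)⁻¹ * (z k * C.mulVec p n₀) := by
      apply mul_nonneg (inv_nonneg.2 (hphat n₀).le)
      apply mul_nonneg (hz k).le
      simp only [Matrix.mulVec, dotProduct]
      exact Finset.sum_nonneg fun l _ => mul_nonneg (hCnn n₀ l) (hppos l).le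
    rw [SIR, div_div]
    apply div_le_div_of_nonneg_left (hppos k).le
    · exact mul_pos (hγ k) (by linarith)
    · calc γ k * (V.mulVec p k + (phat n₀)⁻¹ * (z k * C.mulVec p n₀))
          ≤ γ k * (V.mulVec p k + z k) := by nlinarith [hγ k]
        _ = (V.mulVec p k + z k) * γ k := by ring
  have hjen := jensenPF B hBnn ρ hρ_pos y x p hy hx hppos hyeig hxeig
  have hlog_le : ∀ k, Real.log (SIR V z p k / γ k) ≤
      Real.log (p k) - Real.log ((B *ᵥ p) k) := by
    intro k
    rw [← Real.log_div (hppos k).ne' (hBp_pos k).ne']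
    exact Real.log_le_log (hsp_pos k) (hs_le k)
  have hSlog : ∑ k, y k * x k * Real.log (SIR V z p k / γ k) ≤ W * Real.log t := by
    have h1 : ∑ k, y k * x k * Real.log (SIR V z p k / γ k) ≤
        ∑ k, y k * x k * (Real.log (p k) - Real.log ((B *ᵥ p) k)) := by
      apply Finset.sum_le_sum
      intro k _
      exact mul_le_mul_of_nonneg_left (hlog_le k) (mul_pos (hy k) (hx k)).le
    have h3 : ∑ k, y k * x k * (Real.log (p k) - Real.log ((B *ᵥ p) k)) -
        ∑ k, y k * x k * (-Real.log ρ) =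
        ∑ k, y k * x k * (Real.log ρ + Real.log (p k)) -
        ∑ k, y k * x k * Real.log ((B *ᵥ p) k) := by
      rw [← Finset.sum_sub_distrib, ← Finset.sum_sub_distrib]
      exact Finset.sum_congr rfl (fun k _ => by ring)
    have h4 : ∑ k, y k * x k * (-Real.log ρ) = W * Real.log t := by
      have hρval : ρ = 1 / t := (eq_div_iff ht_pos.ne').2 hρt
      have hlg : -Real.log ρ = Real.log t := by
        rw [hρval, one_div, Real.log_inv, neg_neg]
      calc ∑ k, y k * x k * (-Real.log ρ) = (∑ k, y k * x k) * (-Real.log ρ) := by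
            rw [Finset.sum_mul]
        _ = W * Real.log t := by rw [← hW, hlg]
    linarith [hjen]
  have hmemq : ∀ k, φ (SIR V z p k / γ k) ∈ φ '' Set.Ioi 0 :=
    fun k => ⟨_, hsp_pos k, rfl⟩
  have hwnn : ∀ k ∈ Finset.univ, (0:ℝ) ≤ y k * x k / W :=
    fun k _ => div_nonneg (mul_pos (hy k) (hx k)).le hW_pos.le
  have hw1 : ∑ k, y k * x k / W = 1 := by
    rw [← Finset.sum_div, ← hW, div_self hW_pos.ne']
  have hjen2 : Real.log (g (∑ k, (y k * x k / W) • φ (SIR V z p k / γ k))) ≤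
      ∑ k, (y k * x k / W) • Real.log (g (φ (SIR V z p k / γ k))) :=
    hglog.map_sum_le hwnn hw1 (fun k _ => hmemq k)
  have hA_mem : (∑ k, (y k * x k / W) • φ (SIR V z p k / γ k)) ∈ φ '' Set.Ioi 0 :=
    hglog.1.sum_mem hwnn hw1 (fun k _ => hmemq k)
  have hrhs : ∑ k, (y k * x k / W) • Real.log (g (φ (SIR V z p k / γ k))) ≤
      Real.log t := by
    have he : ∑ k, (y k * x k / W) • Real.log (g (φ (SIR V z p k / γ k))) =
        (∑ k, y k * x k * Real.log (SIR V z p k / γ k)) / W := by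
      rw [Finset.sum_div]
      refine Finset.sum_congr rfl fun k _ => ?_
      rw [smul_eq_mul, hginv _ (hsp_pos k)]
      ring
    rw [he]
    calc (∑ k, y k * x k * Real.log (SIR V z p k / γ k)) / W
        ≤ (W * Real.log t) / W := by
          rw [div_eq_mul_inv, div_eq_mul_inv]
          exact mul_le_mul_of_nonneg_right hSlog (inv_nonneg.2 hW_pos.le)
      _ = Real.log t := by field_simp
  have hhA_le : Real.log (g (∑ k, (y k * x k / W) • φ (SIR V z p k / γ k))) ≤
      Real.log t := le_trans hjen2 hrhs
  have hA_le : (∑ k, (y k * x k / W) • φ (SIR V z p k / γ k)) ≤ φ t := by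
    by_contra hcon
    push_neg at hcon
    obtain ⟨b, hb, hbeq⟩ := hA_mem
    have htb : t < b := by
      by_contra h2
      push_neg at h2
      rcases h2.lt_or_eq with h3 | h3
      · have := hφmono (Set.mem_Ioi.mpr hb) (Set.mem_Ioi.mpr ht_pos) h3
        rw [hbeq] at this
        linarith
      · rw [h3] at hbeq
        linarith [hbeq ▸ hcon]
    have hlogb : Real.log (g (∑ k, (y k * x k / W) • φ (SIR V z p k / γ k))) =
        Real.log b := by rw [← hbeq, hginv b hb]
    rw [hlogb] at hhA_le
    have := Real.log_lt_log ht_pos htb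
    linarith
  calc ∑ k, w k * φ (SIR V z p k / γ k)
      = (c * W) * ∑ k, (y k * x k / W) • φ (SIR V z p k / γ k) := by
        rw [Finset.mul_sum]
        refine Finset.sum_congr rfl fun k _ => ?_
        rw [hw k, smul_eq_mul]
        have hcan : c * W * (y k * x k / W * φ (SIR V z p k / γ k)) =
            c * (y k * x k) * φ (SIR V z p k / γ k) * (W / W) := by ring
        rw [hcan, div_self hW_pos.ne', mul_one]
    _ ≤ (c * W) * φ t :=
        mul_le_mul_of_nonneg_left hA_le (by positivity)
    _ = ∑ k, w k * φ (SIR V z pbar k / γ k) := by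
        have h7 : ∑ k, w k * φ (SIR V z pbar k / γ k) = (c * W) * φ t := by
          calc ∑ k, w k * φ (SIR V z pbar k / γ k)
              = ∑ k, c * (y k * x k) * φ t :=
                Finset.sum_congr rfl fun k _ => by rw [hw k, hbalance k]
            _ = (c * W) * φ t := by
                rw [← Finset.sum_mul, ← Finset.mul_sum, ← hW]
        exact h7.symm
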